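/- Let μ > 0, γ > 0 with γ ≥ √μ/2, and let x ∈ ℝ. Then the proximal cost function g : ℝ → ℝ defined by g(u) = (x − u)²/(2μ) − log(γ/(γ² + u²)) is strictly convex on ℝ. -/

import Mathlib

/-- For μ > 0, γ > 0 with γ ≥ √μ/2 and x ∈ ℝ, the proximal cost function
g(u) = (x − u)²/(2μ) − log(γ/(γ² + u²)) is strictly convex on ℝ. -/
theorem cauchy_prox_cost_strictConvex (μ γ x : ℝ) (hμ : 0 < μ) (hγ : 0 < γ)
    (hcond : Real.sqrt μ / 2 ≤ γ) :
    StrictConvexOn ℝ Set.univ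
      (fun u : ℝ => (x - u) ^ 2 / (2 * μ) - Real.log (γ / (γ ^ 2 + u ^ 2))) := by
  have hden : ∀ u : ℝ, 0 < γ ^ 2 + u ^ 2 := fun u => by positivity
  have h4γ : μ ≤ 4 * γ ^ 2 := by
    have h1 : Real.sqrt μ ≤ 2 * γ := by linarith
    have h2 : Real.sqrt μ ^ 2 ≤ (2 * γ) ^ 2 := by
      apply sq_le_sq' _ h1
      have : 0 ≤ Real.sqrt μ := Real.sqrt_nonneg μ
      linarith
    rw [Real.sq_sqrt hμ.le] at h2
    nlinarith
  set g : ℝ → ℝ := fun u : ℝ => (x - u) ^ 2 / (2 * μ) - Real.log (γ / (γ ^ 2 + u ^ 2))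
    with hg
  set g1 : ℝ → ℝ := fun u => (u - x) / μ + 2 * u / (γ ^ 2 + u ^ 2) with hg1
  set g2 : ℝ → ℝ := fun u => 1 / μ + 2 * (γ ^ 2 - u ^ 2) / (γ ^ 2 + u ^ 2) ^ 2 with hg2
  -- rewrite g using log of division
  have hgeq : g = fun u =>
      (x - u) ^ 2 / (2 * μ) - Real.log γ + Real.log (γ ^ 2 + u ^ 2) := by
    funext u
    show (x - u) ^ 2 / (2 * μ) - Real.log (γ / (γ ^ 2 + u ^ 2)) = _
    rw [Real.log_div hγ.ne' (hden u).ne']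
    ring
  -- first derivative
  have hd1 : ∀ u : ℝ, HasDerivAt g (g1 u) u := by
    intro u
    rw [hgeq]
    have h1 : HasDerivAt (fun u : ℝ => (x - u) ^ 2 / (2 * μ))
        (2 * (x - u) ^ 1 * (0 - 1) / (2 * μ)) u :=
      (((hasDerivAt_const u x).sub (hasDerivAt_id u)).pow 2).div_const _
    have h2 : HasDerivAt (fun u : ℝ => γ ^ 2 + u ^ 2) (0 + 2 * u ^ 1 * 1) u :=
      (hasDerivAt_const u (γ ^ 2)).add ((hasDerivAt_id u).pow 2)
    have h3 : HasDerivAt (fun u : ℝ => Real.log (γ ^ 2 + u ^ 2))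
        ((0 + 2 * u ^ 1 * 1) / (γ ^ 2 + u ^ 2)) u := h2.log (hden u).ne'
    have := (h1.sub_const (Real.log γ)).add h3
    refine this.congr_deriv (Eq.symm ?_)
    rw [hg1]
    field_simp
    ring
  -- second derivative
  have hd2 : ∀ u : ℝ, HasDerivAt g1 (g2 u) u := by
    intro u
    have h1 : HasDerivAt (fun u : ℝ => (u - x) / μ) ((1 - 0) / μ) u :=
      ((hasDerivAt_id u).sub (hasDerivAt_const u x)).div_const μ
    have h2 : HasDerivAt (fun u : ℝ => γ ^ 2 + u ^ 2) (0 + 2 * u ^ 1 * 1) u :=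
      (hasDerivAt_const u (γ ^ 2)).add ((hasDerivAt_id u).pow 2)
    have h3 : HasDerivAt (fun u : ℝ => 2 * u) 2 u := by
      simpa using (hasDerivAt_id u).const_mul 2
    have h4 : HasDerivAt (fun u : ℝ => 2 * u / (γ ^ 2 + u ^ 2))
        ((2 * (γ ^ 2 + u ^ 2) - 2 * u * (0 + 2 * u ^ 1 * 1)) / (γ ^ 2 + u ^ 2) ^ 2) u :=
      h3.div h2 (hden u).ne'
    have := h1.add h4
    refine this.congr_deriv (Eq.symm ?_)
    rw [hg2]
    have hne := (hden u).ne'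
    field_simp
    ring_nf
  have hderiv1 : deriv g = g1 := funext fun u => (hd1 u).deriv
  have hderiv2 : deriv g1 = g2 := funext fun u => (hd2 u).deriv
  -- g2 is nonnegative
  have hkey : ∀ u : ℝ, g2 u * (μ * (γ ^ 2 + u ^ 2) ^ 2)
      = (u ^ 2 + γ ^ 2 - μ) ^ 2 + μ * (4 * γ ^ 2 - μ) := by
    intro u
    rw [hg2]
    have hne := (hden u).ne'
    field_simp
    ring
  have hg2nonneg : ∀ u : ℝ, 0 ≤ g2 u := by
    intro u
    have hpos : 0 < μ * (γ ^ 2 + u ^ 2) ^ 2 := by positivity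
    have h := hkey u
    nlinarith [sq_nonneg (u ^ 2 + γ ^ 2 - μ)]
  -- zeros of g2 have fixed square
  have hg2zero : ∀ u : ℝ, g2 u = 0 → u ^ 2 = μ - γ ^ 2 := by
    intro u hu
    have h := hkey u
    rw [hu, zero_mul] at h
    nlinarith [sq_nonneg (u ^ 2 + γ ^ 2 - μ)]
  -- g1 is monotone
  have hdiff1 : Differentiable ℝ g1 := fun u => (hd2 u).differentiableAt
  have hmono : Monotone g1 := by
    apply monotone_of_deriv_nonneg hdiff1
    intro u
    rw [hderiv2]
    exact hg2nonneg u
  -- g1 is strictly monotone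
  have hsm : StrictMono g1 := by
    intro a b hab
    rcases lt_or_eq_of_le (hmono hab.le) with h | h
    · exact h
    · exfalso
      -- g1 is constant on [a,b]
      have hconst : ∀ t ∈ Set.Icc a b, g1 t = g1 a := by
        intro t ht
        exact le_antisymm (h ▸ hmono ht.2) (hmono ht.1)
      -- so g2 = 0 on (a,b)
      have hz : ∀ t ∈ Set.Ioo a b, g2 t = 0 := by
        intro t ht
        have hev : g1 =ᶠ[nhds t] fun _ => g1 a := by
          filter_upwards [Ioo_mem_nhds ht.1 ht.2] with s hs
          exact hconst s ⟨hs.1.le, hs.2.le⟩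
        have : deriv g1 t = deriv (fun _ : ℝ => g1 a) t := hev.deriv_eq
        rw [hderiv2, deriv_const] at this
        exact this
      -- pick three points in (a,b)
      set c1 : ℝ := a + (b - a) / 4 with hc1
      set c2 : ℝ := a + (b - a) / 2 with hc2
      set c3 : ℝ := a + 3 * (b - a) / 4 with hc3
      have hm1 : c1 ∈ Set.Ioo a b := ⟨by rw [hc1]; linarith, by rw [hc1]; linarith⟩
      have hm2 : c2 ∈ Set.Ioo a b := ⟨by rw [hc2]; linarith, by rw [hc2]; linarith⟩
      have hm3 : c3 ∈ Set.Ioo a b := ⟨by rw [hc3]; linarith, by rw [hc3]; linarith⟩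
      have e1 := hg2zero c1 (hz c1 hm1)
      have e2 := hg2zero c2 (hz c2 hm2)
      have e3 := hg2zero c3 (hz c3 hm3)
      -- c1² = c2² = c3² with c1 < c2 < c3 : contradiction
      have h12 : c1 ^ 2 = c2 ^ 2 := by rw [e1, e2]
      have h13 : c1 ^ 2 = c3 ^ 2 := by rw [e1, e3]
      have hlt12 : c1 < c2 := by rw [hc1, hc2]; linarith
      have hlt23 : c2 < c3 := by rw [hc2, hc3]; linarith
      have hs1 : (c2 - c1) * (c2 + c1) = 0 := by linear_combination -h12
      have hs2 : (c3 - c1) * (c3 + c1) = 0 := by linear_combination -h13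
      have hne1 : c2 - c1 ≠ 0 := sub_ne_zero.mpr hlt12.ne'
      have hne2 : c3 - c1 ≠ 0 := sub_ne_zero.mpr (hlt12.trans hlt23).ne'
      have hz1 : c2 + c1 = 0 := (mul_eq_zero.mp hs1).resolve_left hne1
      have hz2 : c3 + c1 = 0 := (mul_eq_zero.mp hs2).resolve_left hne2
      have : c2 = c3 := by linarith
      linarith
  -- conclude
  have hcont : Continuous g :=
    Differentiable.continuous (fun u => (hd1 u).differentiableAt)
  exact StrictMono.strictConvexOn_univ_of_deriv hcont (by rw [hderiv1]; exact hsm)
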